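/- Under the MDP regularity assumptions, the Bellman optimality operator F has a unique fixed point Q* among bounded measurable functions Q : X × A → ℝ, and this fixed point satisfies ‖Q*‖_∞ ≤ V_max and, for each a ∈ A, the function x ↦ Q*(x,a) is Lipschitz on X with Lipschitz constant M_r + γ V_max M_p. -/
import Mathlib

open MeasureTheory Filter

noncomputable def bellSeq {d : ℕ} (X : Set (EuclideanSpace ℝ (Fin d))) {A : Type*} [Fintype A]
    (γ : ℝ) (r : EuclideanSpace ℝ (Fin d) → A → ℝ)
    (p : EuclideanSpace ℝ (Fin d) → EuclideanSpace ℝ (Fin d) → A → ℝ) :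
    ℕ → EuclideanSpace ℝ (Fin d) → A → ℝ
  | 0 => fun _ _ => 0
  | n + 1 => fun x a => r x a + γ * ∫ y in X, p y x a * ⨆ b, bellSeq X γ r p n y b

theorem supdiff {A : Type*} [Fintype A] [Nonempty A] (f g : A → ℝ) (c : ℝ)
    (h : ∀ b, |f b - g b| ≤ c) : |(⨆ b, f b) - ⨆ b, g b| ≤ c := by
  have bf := Set.Finite.bddAbove (Set.finite_range f)
  have bg := Set.Finite.bddAbove (Set.finite_range g)
  rw [abs_sub_le_iff]
  constructor
  · rw [sub_le_iff_le_add]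
    exact ciSup_le fun b => by nlinarith [le_ciSup bg b, abs_le.1 (h b)]
  · rw [sub_le_iff_le_add]
    exact ciSup_le fun b => by nlinarith [le_ciSup bf b, abs_le.1 (h b)]

theorem supbd {A : Type*} [Fintype A] [Nonempty A] (f : A → ℝ) (c : ℝ)
    (h : ∀ b, |f b| ≤ c) : |⨆ b, f b| ≤ c := by
  simpa using supdiff f (fun _ => 0) c (by simpa using h)

theorem keyA {d : ℕ} (X : Set (EuclideanSpace ℝ (Fin d))) (hXm : MeasurableSet X)
    (pf g : EuclideanSpace ℝ (Fin d) → ℝ) (c : ℝ)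
    (hpf_int : IntegrableOn pf X) (hpf_nn : ∀ y ∈ X, 0 ≤ pf y)
    (hg : AEMeasurable g (volume.restrict X)) (hgc : ∀ y ∈ X, |g y| ≤ c) :
    IntegrableOn (fun y => pf y * g y) X ∧
      |∫ y in X, pf y * g y| ≤ c * ∫ y in X, pf y := by
  have hmeas : AEStronglyMeasurable (fun y => pf y * g y) (volume.restrict X) :=
    (hpf_int.aemeasurable.mul hg).aestronglyMeasurable
  have hptw : ∀ᵐ y ∂(volume.restrict X), ‖pf y * g y‖ ≤ c * pf y := by
    refine (ae_restrict_iff' hXm).2 (Filter.Eventually.of_forall fun y hy => ?_)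
    rw [Real.norm_eq_abs, abs_mul, abs_of_nonneg (hpf_nn y hy)]
    nlinarith [hgc y hy, hpf_nn y hy, abs_nonneg (g y)]
  have hint : IntegrableOn (fun y => pf y * g y) X :=
    Integrable.mono' (hpf_int.const_mul c) hmeas hptw
  refine ⟨hint, ?_⟩
  calc |∫ y in X, pf y * g y| ≤ ∫ y in X, ‖pf y * g y‖ :=
        norm_integral_le_integral_norm (μ := volume.restrict X) (fun y => pf y * g y)
    _ ≤ ∫ y in X, c * pf y := integral_mono_ae hint.norm (hpf_int.const_mul c) hptw
    _ = c * ∫ y in X, pf y := integral_const_mul c pf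

theorem keyC {d : ℕ} (X : Set (EuclideanSpace ℝ (Fin d))) (hXm : MeasurableSet X)
    (pf pf' g W : EuclideanSpace ℝ (Fin d) → ℝ) (c t : ℝ)
    (h1 : IntegrableOn (fun y => pf y * g y) X)
    (h2 : IntegrableOn (fun y => pf' y * g y) X)
    (hW_int : IntegrableOn W X) (hgc : ∀ y ∈ X, |g y| ≤ c)
    (hlip : ∀ y ∈ X, |pf y - pf' y| ≤ W y * t) :
    |(∫ y in X, pf y * g y) - ∫ y in X, pf' y * g y| ≤ (∫ y in X, W y) * (t * c) := by
  rw [← integral_sub h1 h2]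
  have hsub : IntegrableOn (fun y => pf y * g y - pf' y * g y) X := h1.sub h2
  calc |∫ y in X, (pf y * g y - pf' y * g y)|
      ≤ ∫ y in X, ‖pf y * g y - pf' y * g y‖ :=
        norm_integral_le_integral_norm (μ := volume.restrict X)
            (fun y => pf y * g y - pf' y * g y)
    _ ≤ ∫ y in X, (t * c) * W y := by
        refine integral_mono_ae hsub.norm (hW_int.const_mul (t * c)) ?_
        refine (ae_restrict_iff' hXm).2 (Filter.Eventually.of_forall fun y hy => ?_)
        have h3 := hlip y hy
        have h4 := hgc y hy
        have h5 : ‖pf y * g y - pf' y * g y‖ = |pf y - pf' y| * |g y| := by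
          rw [Real.norm_eq_abs, ← abs_mul, sub_mul]
        show ‖pf y * g y - pf' y * g y‖ ≤ t * c * W y
        rw [h5]
        have h6 : |pf y - pf' y| * |g y| ≤ (W y * t) * c :=
          mul_le_mul h3 h4 (abs_nonneg _) (le_trans (abs_nonneg _) h3)
        linarith [h6]
    _ = (∫ y in X, W y) * (t * c) := by rw [integral_const_mul, mul_comm]

/-- Under the MDP regularity assumptions, the Bellman optimality operator has a unique
bounded measurable fixed point `Q*`, which is bounded by `V_max` and Lipschitz with
constant `M_r + γ V_max M_p` in the state variable. -/
theorem bellman_fixed_point_bounded_lipschitz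
    (d : ℕ) (X : Set (EuclideanSpace ℝ (Fin d)))
    (hXne : X.Nonempty) (hXcomp : IsCompact X)
    (A : Type*) [Fintype A] [Nonempty A]
    (γ β Rmax Vmax Mr Mp : ℝ)
    (hγ : γ ∈ Set.Ioo (0:ℝ) 1) (hβ : β = 1 / (1 - γ)) (hVmax : Vmax = β * Rmax)
    (r : EuclideanSpace ℝ (Fin d) → A → ℝ)
    (hr_meas : ∀ a, Measurable fun x => r x a)
    (hr_nonneg : ∀ x ∈ X, ∀ a : A, 0 ≤ r x a)
    (hr_bdd : ∀ x ∈ X, ∀ a : A, r x a ≤ Rmax)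
    (hr_lip : ∀ a : A, ∀ x ∈ X, ∀ x' ∈ X, |r x a - r x' a| ≤ Mr * ‖x - x'‖)
    (p : EuclideanSpace ℝ (Fin d) → EuclideanSpace ℝ (Fin d) → A → ℝ)
    (hp_meas : ∀ x ∈ X, ∀ a : A, Measurable fun y => p y x a)
    (hp_nonneg : ∀ y ∈ X, ∀ x ∈ X, ∀ a : A, 0 ≤ p y x a)
    (hp_int : ∀ x ∈ X, ∀ a : A, ∫ y in X, p y x a = 1)
    (W : EuclideanSpace ℝ (Fin d) → ℝ)
    (hW_meas : Measurable W) (hW_nonneg : ∀ y ∈ X, 0 ≤ W y)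
    (hW_integrable : IntegrableOn W X)
    (hp_lip : ∀ a : A, ∀ x ∈ X, ∀ x' ∈ X, ∀ y ∈ X,
      |p y x a - p y x' a| ≤ W y * ‖x - x'‖)
    (hW_int : ∫ y in X, W y ≤ Mp) :
    ∃ Qstar : EuclideanSpace ℝ (Fin d) → A → ℝ,
      (∀ a, Measurable fun x => Qstar x a) ∧
      (∀ x ∈ X, ∀ a : A, |Qstar x a| ≤ Vmax) ∧
      (∀ a : A, ∀ x ∈ X, ∀ x' ∈ X,
        |Qstar x a - Qstar x' a| ≤ (Mr + γ * Vmax * Mp) * ‖x - x'‖) ∧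
      (∀ x ∈ X, ∀ a : A,
        Qstar x a = r x a + γ * ∫ y in X, p y x a * ⨆ b : A, Qstar y b) ∧
      (∀ Q : EuclideanSpace ℝ (Fin d) → A → ℝ,
        (∀ a, Measurable fun x => Q x a) →
        (∃ B : ℝ, ∀ x ∈ X, ∀ a : A, |Q x a| ≤ B) →
        (∀ x ∈ X, ∀ a : A,
          Q x a = r x a + γ * ∫ y in X, p y x a * ⨆ b : A, Q y b) →
        ∀ x ∈ X, ∀ a : A, Q x a = Qstar x a) := by
  classical
  obtain ⟨hγ0, hγ1⟩ := hγ
  obtain ⟨x0, hx0⟩ := hXne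
  set a0 : A := Classical.arbitrary A with ha0
  have hXm : MeasurableSet X := hXcomp.measurableSet
  have hRmax : 0 ≤ Rmax := le_trans (hr_nonneg x0 hx0 a0) (hr_bdd x0 hx0 a0)
  have h1γ : 0 < 1 - γ := by linarith
  have hβpos : 0 < β := by rw [hβ]; positivity
  have hVnn : 0 ≤ Vmax := by rw [hVmax]; positivity
  have hVfix : Rmax + γ * Vmax = Vmax := by
    rw [hVmax, hβ]; field_simp; ring
  have hMp : 0 ≤ Mp :=
    le_trans (setIntegral_nonneg hXm hW_nonneg) hW_int
  set L : ℝ := Mr + γ * Vmax * Mp with hL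
  -- integrability of the kernel
  have hp_integrable : ∀ x ∈ X, ∀ a : A, IntegrableOn (fun y => p y x a) X := by
    intro x hx a
    by_contra h
    have h1 := hp_int x hx a
    rw [integral_undef h] at h1
    norm_num at h1
  -- measurability from Lipschitz-type bounds on X
  have mkmeas : ∀ (f : EuclideanSpace ℝ (Fin d) → ℝ) (K : ℝ),
      (∀ y ∈ X, ∀ y' ∈ X, |f y - f y'| ≤ K * ‖y - y'‖) →
      AEMeasurable f (volume.restrict X) := by
    intro f K hf
    have hlip : LipschitzOnWith (Real.toNNReal K) f X := by
      rw [lipschitzOnWith_iff_dist_le_mul]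
      intro y hy y' hy'
      rw [Real.dist_eq, dist_eq_norm]
      exact (hf y hy y' hy').trans
        (mul_le_mul_of_nonneg_right (Real.le_coe_toNNReal K) (norm_nonneg _))
    exact hlip.continuousOn.aemeasurable hXm
  -- difference of integrals under the same kernel
  have keyB : ∀ x ∈ X, ∀ a : A, ∀ (g h : EuclideanSpace ℝ (Fin d) → ℝ) (cg ch ε : ℝ),
      AEMeasurable g (volume.restrict X) → AEMeasurable h (volume.restrict X) →
      (∀ y ∈ X, |g y| ≤ cg) → (∀ y ∈ X, |h y| ≤ ch) → (∀ y ∈ X, |g y - h y| ≤ ε) →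
      |(∫ y in X, p y x a * g y) - ∫ y in X, p y x a * h y| ≤ ε := by
    intro x hx a g h cg ch ε hg hh hgc hhc hε
    have hnn : ∀ y ∈ X, 0 ≤ p y x a := fun y hy => hp_nonneg y hy x hx a
    have hA1 := keyA X hXm (fun y => p y x a) g cg (hp_integrable x hx a) hnn hg hgc
    have hA2 := keyA X hXm (fun y => p y x a) h ch (hp_integrable x hx a) hnn hh hhc
    have hA3 := keyA X hXm (fun y => p y x a) (fun y => g y - h y) ε
      (hp_integrable x hx a) hnn (hg.sub hh) hε
    have heq : (∫ y in X, p y x a * g y) - ∫ y in X, p y x a * h y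
        = ∫ y in X, p y x a * (g y - h y) := by
      rw [← integral_sub hA1.1 hA2.1]
      congr 1; funext y; ring
    rw [heq]
    have := hA3.2
    rw [hp_int x hx a, mul_one] at this
    exact this
  -- Lipschitz dependence of the integral on x
  have keyL : ∀ a : A, ∀ x ∈ X, ∀ x' ∈ X, ∀ (g : EuclideanSpace ℝ (Fin d) → ℝ) (c : ℝ),
      AEMeasurable g (volume.restrict X) → (∀ y ∈ X, |g y| ≤ c) →
      |(∫ y in X, p y x a * g y) - ∫ y in X, p y x' a * g y| ≤ Mp * ‖x - x'‖ * c := by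
    intro a x hx x' hx' g c hg hgc
    have hc : 0 ≤ c := le_trans (abs_nonneg _) (hgc x0 hx0)
    have hA1 := keyA X hXm (fun y => p y x a) g c (hp_integrable x hx a)
      (fun y hy => hp_nonneg y hy x hx a) hg hgc
    have hA2 := keyA X hXm (fun y => p y x' a) g c (hp_integrable x' hx' a)
      (fun y hy => hp_nonneg y hy x' hx' a) hg hgc
    have h3 := keyC X hXm (fun y => p y x a) (fun y => p y x' a) g W c ‖x - x'‖
      hA1.1 hA2.1 hW_integrable hgc (fun y hy => hp_lip a x hx x' hx' y hy)
    refine h3.trans ?_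
    have : (∫ y in X, W y) * (‖x - x'‖ * c) ≤ Mp * (‖x - x'‖ * c) :=
      mul_le_mul_of_nonneg_right hW_int (by positivity)
    linarith [this]
  set Qn := bellSeq X γ r p with hQndef
  have defQ : ∀ (n : ℕ) x (a : A),
      Qn (n + 1) x a = r x a + γ * ∫ y in X, p y x a * ⨆ b, Qn n y b :=
    fun _ _ _ => rfl
  have hLnn : ∀ x ∈ X, ∀ x' ∈ X, 0 ≤ L * ‖x - x'‖ := by
    intro x hx x' hx'
    have h0 : 0 ≤ Mr * ‖x - x'‖ := le_trans (abs_nonneg _) (hr_lip a0 x hx x' hx')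
    have : 0 ≤ γ * Vmax * Mp * ‖x - x'‖ := by positivity
    rw [hL]; nlinarith
  -- main induction: boundedness and Lipschitz property of the iterates
  have hP : ∀ n : ℕ, (∀ x ∈ X, ∀ a : A, |Qn n x a| ≤ Vmax) ∧
      (∀ a : A, ∀ x ∈ X, ∀ x' ∈ X, |Qn n x a - Qn n x' a| ≤ L * ‖x - x'‖) := by
    intro n
    induction n with
    | zero =>
      constructor
      · intro x _ a; simpa [hQndef, bellSeq] using hVnn
      · intro a x hx x' hx'
        have h := hLnn x hx x' hx'
        simpa [hQndef, bellSeq] using h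
    | succ n ih =>
      obtain ⟨ihb, ihl⟩ := ih
      have hgbd : ∀ y ∈ X, |⨆ b, Qn n y b| ≤ Vmax :=
        fun y hy => supbd _ _ (fun b => ihb y hy b)
      have hgdiff : ∀ y ∈ X, ∀ y' ∈ X,
          |(⨆ b, Qn n y b) - ⨆ b, Qn n y' b| ≤ L * ‖y - y'‖ :=
        fun y hy y' hy' => supdiff _ _ _ (fun b => ihl b y hy y' hy')
      have hgmeas : AEMeasurable (fun y => ⨆ b, Qn n y b) (volume.restrict X) :=
        mkmeas _ L hgdiff
      constructor
      · intro x hx a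
        have hA := keyA X hXm (fun y => p y x a) (fun y => ⨆ b, Qn n y b) Vmax
          (hp_integrable x hx a) (fun y hy => hp_nonneg y hy x hx a) hgmeas hgbd
        have hI := hA.2
        rw [hp_int x hx a, mul_one] at hI
        rw [defQ]
        have h1 := hr_nonneg x hx a
        have h2 := hr_bdd x hx a
        calc |r x a + γ * ∫ y in X, p y x a * ⨆ b, Qn n y b|
            ≤ |r x a| + |γ * ∫ y in X, p y x a * ⨆ b, Qn n y b| := abs_add_le _ _
          _ ≤ Rmax + γ * Vmax := by
              rw [abs_of_nonneg h1, abs_mul, abs_of_pos hγ0]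
              have := mul_le_mul_of_nonneg_left hI (le_of_lt hγ0)
              linarith
          _ = Vmax := hVfix
      · intro a x hx x' hx'
        rw [defQ, defQ]
        have h1 := hr_lip a x hx x' hx'
        have h2 := keyL a x hx x' hx' (fun y => ⨆ b, Qn n y b) Vmax hgmeas hgbd
        have habs : |(r x a + γ * ∫ y in X, p y x a * ⨆ b, Qn n y b)
            - (r x' a + γ * ∫ y in X, p y x' a * ⨆ b, Qn n y b)|
            ≤ |r x a - r x' a| + γ * |(∫ y in X, p y x a * ⨆ b, Qn n y b)
              - ∫ y in X, p y x' a * ⨆ b, Qn n y b| := by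
          have := abs_add_le (r x a - r x' a)
            (γ * ((∫ y in X, p y x a * ⨆ b, Qn n y b)
              - ∫ y in X, p y x' a * ⨆ b, Qn n y b))
          rw [abs_mul, abs_of_pos hγ0] at this
          calc _ = |(r x a - r x' a) + γ * ((∫ y in X, p y x a * ⨆ b, Qn n y b)
              - ∫ y in X, p y x' a * ⨆ b, Qn n y b)| := by ring_nf
            _ ≤ _ := this
        refine habs.trans ?_
        rw [hL]
        nlinarith [mul_le_mul_of_nonneg_left h2 (le_of_lt hγ0)]
  -- geometric Cauchy estimate
  have hcauchy : ∀ n : ℕ, ∀ x ∈ X, ∀ a : A,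
      |Qn (n + 1) x a - Qn n x a| ≤ Vmax * γ ^ n := by
    intro n
    induction n with
    | zero =>
      intro x hx a
      have := (hP 1).1 x hx a
      simpa [hQndef, bellSeq] using this
    | succ n ih =>
      intro x hx a
      rw [defQ, defQ]
      have hgm1 : AEMeasurable (fun y => ⨆ b, Qn (n+1) y b) (volume.restrict X) :=
        mkmeas _ L (fun y hy y' hy' => supdiff _ _ _ (fun b => (hP (n+1)).2 b y hy y' hy'))
      have hgm0 : AEMeasurable (fun y => ⨆ b, Qn n y b) (volume.restrict X) :=
        mkmeas _ L (fun y hy y' hy' => supdiff _ _ _ (fun b => (hP n).2 b y hy y' hy'))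
      have hdiff := keyB x hx a (fun y => ⨆ b, Qn (n+1) y b) (fun y => ⨆ b, Qn n y b)
        Vmax Vmax (Vmax * γ ^ n) hgm1 hgm0
        (fun y hy => supbd _ _ (fun b => (hP (n+1)).1 y hy b))
        (fun y hy => supbd _ _ (fun b => (hP n).1 y hy b))
        (fun y hy => supdiff _ _ _ (fun b => ih y hy b))
      have heq : (r x a + γ * ∫ y in X, p y x a * ⨆ b, Qn (n+1) y b)
          - (r x a + γ * ∫ y in X, p y x a * ⨆ b, Qn n y b)
          = γ * ((∫ y in X, p y x a * ⨆ b, Qn (n+1) y b)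
            - ∫ y in X, p y x a * ⨆ b, Qn n y b) := by ring
      rw [heq, abs_mul, abs_of_pos hγ0]
      calc γ * |(∫ y in X, p y x a * ⨆ b, Qn (n+1) y b)
            - ∫ y in X, p y x a * ⨆ b, Qn n y b|
          ≤ γ * (Vmax * γ ^ n) := mul_le_mul_of_nonneg_left hdiff (le_of_lt hγ0)
        _ = Vmax * γ ^ (n + 1) := by ring
  -- convergence
  have hCS : ∀ x, x ∈ X → ∀ a : A, ∃ l : ℝ,
      Tendsto (fun n => Qn n x a) atTop (nhds l) := by
    intro x hx a
    have hc : CauchySeq (fun n => Qn n x a) := by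
      refine cauchySeq_of_le_geometric γ Vmax hγ1 (fun n => ?_)
      rw [Real.dist_eq, abs_sub_comm]
      exact hcauchy n x hx a
    exact cauchySeq_tendsto_of_complete hc
  choose Ql hQl using hCS
  set Q0f : EuclideanSpace ℝ (Fin d) → A → ℝ :=
    fun x a => if h : x ∈ X then Ql x h a else 0 with hQ0fdef
  have hQ0f : ∀ x (hx : x ∈ X) (a : A), Q0f x a = Ql x hx a := by
    intro x hx a; simp [hQ0fdef, dif_pos hx]
  have htend : ∀ x ∈ X, ∀ a : A,
      Tendsto (fun n => Qn n x a) atTop (nhds (Q0f x a)) := by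
    intro x hx a; rw [hQ0f x hx a]; exact hQl x hx a
  have hrate : ∀ n : ℕ, ∀ x ∈ X, ∀ a : A,
      |Qn n x a - Q0f x a| ≤ Vmax * β * γ ^ n := by
    intro n x hx a
    have hd : ∀ m, dist (Qn m x a) (Qn (m+1) x a) ≤ Vmax * γ ^ m := by
      intro m; rw [Real.dist_eq, abs_sub_comm]; exact hcauchy m x hx a
    have := dist_le_of_le_geometric_of_tendsto γ Vmax hγ1 hd (htend x hx a) n
    rw [Real.dist_eq] at this
    refine this.trans (le_of_eq ?_)
    rw [hβ]; field_simp
  have hQ0bd : ∀ x ∈ X, ∀ a : A, |Q0f x a| ≤ Vmax := by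
    intro x hx a
    exact le_of_tendsto' ((htend x hx a).abs) (fun n => (hP n).1 x hx a)
  have hQ0lip : ∀ a : A, ∀ x ∈ X, ∀ x' ∈ X,
      |Q0f x a - Q0f x' a| ≤ L * ‖x - x'‖ := by
    intro a x hx x' hx'
    exact le_of_tendsto' (((htend x hx a).sub (htend x' hx' a)).abs)
      (fun n => (hP n).2 a x hx x' hx')
  have hsup0bd : ∀ y ∈ X, |⨆ b, Q0f y b| ≤ Vmax :=
    fun y hy => supbd _ _ (fun b => hQ0bd y hy b)
  have hsup0meas : AEMeasurable (fun y => ⨆ b, Q0f y b) (volume.restrict X) :=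
    mkmeas _ L (fun y hy y' hy' => supdiff _ _ _ (fun b => hQ0lip b y hy y' hy'))
  -- fixed point equation for Q0f on X
  have hfix0 : ∀ x ∈ X, ∀ a : A,
      Q0f x a = r x a + γ * ∫ y in X, p y x a * ⨆ b, Q0f y b := by
    intro x hx a
    have h1 : Tendsto (fun n => Qn (n + 1) x a) atTop (nhds (Q0f x a)) :=
      (htend x hx a).comp (tendsto_add_atTop_nat 1)
    have h2 : Tendsto (fun n => Qn (n + 1) x a) atTop
        (nhds (r x a + γ * ∫ y in X, p y x a * ⨆ b, Q0f y b)) := by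
      have hz : Tendsto
          (fun n => Qn (n + 1) x a - (r x a + γ * ∫ y in X, p y x a * ⨆ b, Q0f y b))
          atTop (nhds 0) := by
        refine squeeze_zero_norm (fun n => ?_)
          (by simpa using (tendsto_pow_atTop_nhds_zero_of_lt_one (le_of_lt hγ0)
            hγ1).const_mul (γ * (Vmax * β)))
        have hgm : AEMeasurable (fun y => ⨆ b, Qn n y b) (volume.restrict X) :=
          mkmeas _ L (fun y hy y' hy' => supdiff _ _ _ (fun b => (hP n).2 b y hy y' hy'))
        have hdiff := keyB x hx a (fun y => ⨆ b, Qn n y b) (fun y => ⨆ b, Q0f y b)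
          Vmax Vmax (Vmax * β * γ ^ n) hgm hsup0meas
          (fun y hy => supbd _ _ (fun b => (hP n).1 y hy b)) hsup0bd
          (fun y hy => supdiff _ _ _ (fun b => hrate n y hy b))
        rw [Real.norm_eq_abs, defQ]
        have heq : (r x a + γ * ∫ y in X, p y x a * ⨆ b, Qn n y b)
            - (r x a + γ * ∫ y in X, p y x a * ⨆ b, Q0f y b)
            = γ * ((∫ y in X, p y x a * ⨆ b, Qn n y b)
              - ∫ y in X, p y x a * ⨆ b, Q0f y b) := by ring
        rw [heq, abs_mul, abs_of_pos hγ0]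
        calc γ * |(∫ y in X, p y x a * ⨆ b, Qn n y b)
              - ∫ y in X, p y x a * ⨆ b, Q0f y b|
            ≤ γ * (Vmax * β * γ ^ n) := mul_le_mul_of_nonneg_left hdiff (le_of_lt hγ0)
          _ = γ * (Vmax * β) * γ ^ n := by ring
      have := hz.add_const (r x a + γ * ∫ y in X, p y x a * ⨆ b, Q0f y b)
      simpa using this
    exact tendsto_nhds_unique h1 h2
  -- Lipschitz extension to the whole space
  have hLext : ∀ a : A, ∃ g : EuclideanSpace ℝ (Fin d) → ℝ,
      LipschitzWith (Real.toNNReal L) g ∧ Set.EqOn (fun x => Q0f x a) g X := by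
    intro a
    refine LipschitzOnWith.extend_real ?_
    rw [lipschitzOnWith_iff_dist_le_mul]
    intro y hy y' hy'
    rw [Real.dist_eq, dist_eq_norm]
    exact (hQ0lip a y hy y' hy').trans
      (mul_le_mul_of_nonneg_right (Real.le_coe_toNNReal L) (norm_nonneg _))
  choose G hG using hLext
  refine ⟨fun x a => G a x, ?_, ?_, ?_, ?_, ?_⟩
  · exact fun a => (hG a).1.continuous.measurable
  · intro x hx a
    show |G a x| ≤ Vmax
    have h1 : G a x = Q0f x a := ((hG a).2 hx).symm
    rw [h1]
    exact hQ0bd x hx a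
  · intro a x hx x' hx'
    show |G a x - G a x'| ≤ L * ‖x - x'‖
    have h1 : G a x = Q0f x a := ((hG a).2 hx).symm
    have h2 : G a x' = Q0f x' a := ((hG a).2 hx').symm
    rw [h1, h2]
    exact hQ0lip a x hx x' hx'
  · intro x hx a
    show G a x = r x a + γ * ∫ y in X, p y x a * ⨆ b, G b y
    have h1 : G a x = Q0f x a := ((hG a).2 hx).symm
    rw [h1, hfix0 x hx a]
    congr 1
    congr 1
    refine setIntegral_congr_fun hXm (fun y hy => ?_)
    congr 1
    exact congrArg iSup (funext fun b => show Q0f y b = G b y from (hG b).2 hy)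
  · -- uniqueness
    rintro Q hQmeas ⟨B, hQbd⟩ hQfix
    have hGbd : ∀ y ∈ X, ∀ b : A, |G b y| ≤ Vmax := by
      intro y hy b
      have h1 : G b y = Q0f y b := ((hG b).2 hy).symm
      rw [h1]; exact hQ0bd y hy b
    have hGfix : ∀ x ∈ X, ∀ a : A,
        G a x = r x a + γ * ∫ y in X, p y x a * ⨆ b, G b y := by
      intro x hx a
      have h1 : G a x = Q0f x a := ((hG a).2 hx).symm
      rw [h1, hfix0 x hx a]
      congr 1
      congr 1
      refine setIntegral_congr_fun hXm (fun y hy => ?_)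
      congr 1
      exact congrArg iSup (funext fun b => show Q0f y b = G b y from (hG b).2 hy)
    have hsupQmeas : AEMeasurable (fun y => ⨆ b, Q y b) (volume.restrict X) :=
      (Measurable.iSup (fun b => hQmeas b)).aemeasurable
    have hsupGmeas : AEMeasurable (fun y => ⨆ b, G b y) (volume.restrict X) :=
      (Measurable.iSup (fun b => (hG b).1.continuous.measurable)).aemeasurable
    have huniq : ∀ n : ℕ, ∀ x ∈ X, ∀ a : A,
        |Q x a - G a x| ≤ (B + Vmax) * γ ^ n := by
      intro n
      induction n with
      | zero =>
        intro x hx a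
        have h1 := hQbd x hx a
        have h2 := hGbd x hx a
        have h3 : |Q x a - G a x| ≤ |Q x a| + |G a x| := by
          simpa using abs_sub_le (Q x a) 0 (G a x)
        simpa using h3.trans (add_le_add h1 h2)
      | succ n ih =>
        intro x hx a
        rw [hQfix x hx a, hGfix x hx a]
        have hdiff := keyB x hx a (fun y => ⨆ b, Q y b) (fun y => ⨆ b, G b y)
          B Vmax ((B + Vmax) * γ ^ n) hsupQmeas hsupGmeas
          (fun y hy => supbd _ _ (fun b => hQbd y hy b))
          (fun y hy => supbd _ _ (fun b => hGbd y hy b))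
          (fun y hy => supdiff _ _ _ (fun b => ih y hy b))
        have heq : (r x a + γ * ∫ y in X, p y x a * ⨆ b, Q y b)
            - (r x a + γ * ∫ y in X, p y x a * ⨆ b, G b y)
            = γ * ((∫ y in X, p y x a * ⨆ b, Q y b)
              - ∫ y in X, p y x a * ⨆ b, G b y) := by ring
        rw [heq, abs_mul, abs_of_pos hγ0]
        calc γ * |(∫ y in X, p y x a * ⨆ b, Q y b)
              - ∫ y in X, p y x a * ⨆ b, G b y|
            ≤ γ * ((B + Vmax) * γ ^ n) := mul_le_mul_of_nonneg_left hdiff (le_of_lt hγ0)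
          _ = (B + Vmax) * γ ^ (n + 1) := by ring
    intro x hx a
    show Q x a = G a x
    have hzero : Tendsto (fun n => (B + Vmax) * γ ^ n) atTop (nhds 0) := by
      simpa using (tendsto_pow_atTop_nhds_zero_of_lt_one (le_of_lt hγ0)
        hγ1).const_mul (B + Vmax)
    have hle : |Q x a - G a x| ≤ 0 :=
      ge_of_tendsto' hzero (fun n => huniq n x hx a)
    have : Q x a - G a x = 0 := abs_eq_zero.1 (le_antisymm hle (abs_nonneg _))
    linarith
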